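/- Let W be an n×n symmetric doubly stochastic positive semidefinite matrix, so that I − W is positive semidefinite with positive semidefinite square root (I − W)^{1/2}. Let M̃^(t) (t ≥ −1, with M̃^(−1) = 0) be any sequence in ℝ^{n×d}, and define sequences X̃^(t), Ỹ^(t) by Ỹ^(0) = 0, X̃^(0) given, and for t ≥ 0: X̃^(t+1) = W(X̃^(t) − αM̃^(t)) − (I − W)^{1/2}·Ỹ^(t) and Ỹ^(t+1) = Ỹ^(t) + (I − W)^{1/2}·X̃^(t+1). Then, setting X̃^(−1) = X̃^(0), the sequence X̃ satisfies the second-order recursion X̃^(t+1) = W(2X̃^(t) − X̃^(t−1) − αM̃^(t) + αM̃^(t−1)) for all t ≥ 0. -/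
import Mathlib


/-- For a symmetric doubly stochastic PSD matrix `W` with PSD square root
`S = (I - W)^{1/2}` (i.e. `S` is PSD, `S * S = 1 - W`, and `S` commutes with `W`), the
first-order system `X̃^{t+1} = W(X̃^t - αM̃^t) - S Ỹ^t`, `Ỹ^{t+1} = Ỹ^t + S X̃^{t+1}`,
`Ỹ^0 = 0`, `M̃^{-1} = 0`, with the convention `X̃^{-1} = X̃^0`, satisfies the second-order
recursion `X̃^{t+1} = W(2X̃^t - X̃^{t-1} - αM̃^t + αM̃^{t-1})` for all `t ≥ 0`. -/
theorem exact_diffusion_second_order_recursion {n d : ℕ}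
    (W : Matrix (Fin n) (Fin n) ℝ)
    (hWsymm : W.IsSymm)
    (hWnonneg : ∀ i j, 0 ≤ W i j)
    (hWrow : ∀ i, ∑ j, W i j = 1)
    (hWcol : ∀ j, ∑ i, W i j = 1)
    (hWpsd : W.PosSemidef)
    (S : Matrix (Fin n) (Fin n) ℝ)
    (hSpsd : S.PosSemidef)
    (hSsq : S * S = 1 - W)
    (hSW : S * W = W * S)
    (α : ℝ) (hα : 0 < α)
    (Mt Xt Yt : ℤ → Matrix (Fin n) (Fin d) ℝ)
    (hMm1 : Mt (-1) = 0)
    (hY0 : Yt 0 = 0)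
    (hXm1 : Xt (-1) = Xt 0)
    (hXrec : ∀ t : ℤ, 0 ≤ t → Xt (t + 1) = W * (Xt t - α • Mt t) - S * Yt t)
    (hYrec : ∀ t : ℤ, 0 ≤ t → Yt (t + 1) = Yt t + S * Xt (t + 1)) :
    ∀ t : ℤ, 0 ≤ t →
      Xt (t + 1) = W * ((2 : ℝ) • Xt t - Xt (t - 1) - α • Mt t + α • Mt (t - 1)) := by
  intro t ht
  rcases eq_or_lt_of_le ht with h0 | h1
  · subst h0
    have e1 := hXrec 0 le_rfl
    simp only [zero_add, hY0, Matrix.mul_zero, sub_zero] at e1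
    simp only [zero_add, zero_sub, e1, hXm1, hMm1]
    congr 1
    module
  · have ht1 : (1:ℤ) ≤ t := h1
    have e1 := hXrec t ht
    have e2 := hXrec (t-1) (by omega)
    have e3 := hYrec (t-1) (by omega)
    rw [show t-1+1 = t by ring] at e2 e3
    have hSY : S * Yt (t-1) = W * (Xt (t-1) - α • Mt (t-1)) - Xt t := by
      rw [e2]; abel
    rw [e1, e3, Matrix.mul_add, hSY, ← Matrix.mul_assoc, hSsq]
    simp only [Matrix.mul_sub, Matrix.mul_add, Matrix.mul_smul, Matrix.one_mul,
      Matrix.sub_mul, Matrix.smul_mul, two_smul]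
    abel
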